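/- Let T : ℝⁿ → ℝⁿ be a γ-contraction in the sup-norm with 0 < γ < 1 and fixed point U*. Define β_k = 1/(∑_{i=0}^{k} γ^{-2i}) and the Halpern/anchored iteration U^k = β_k U^0 + (1 - β_k) T U^{k-1} for k ≥ 1. Then for all k, ‖U^k - U*‖_∞ ≤ ‖U^0 - U*‖_∞. -/

import Mathlib

theorem stmt_4 (n : ℕ) (hn : 0 < n) (γ : ℝ) (hγ0 : 0 < γ) (hγ1 : γ < 1)
    (T : (Fin n → ℝ) → (Fin n → ℝ))
    (hT : ∀ x y : Fin n → ℝ, ‖T x - T y‖ ≤ γ * ‖x - y‖)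
    (Ustar : Fin n → ℝ) (hfix : T Ustar = Ustar)
    (β : ℕ → ℝ) (hβ : ∀ k, β k = (∑ i ∈ Finset.range (k+1), (γ^(2*i))⁻¹)⁻¹)
    (U : ℕ → Fin n → ℝ)
    (hU : ∀ k : ℕ, U (k+1) = β (k+1) • U 0 + (1 - β (k+1)) • T (U k)) :
    ∀ k, ‖U k - Ustar‖ ≤ ‖U 0 - Ustar‖ := by
  have hβpos : ∀ k, 0 < β k ∧ β k ≤ 1 := by
    intro k
    have hslb : (1:ℝ) ≤ ∑ i ∈ Finset.range (k+1), (γ^(2*i))⁻¹ := by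
      have h0 : ((γ:ℝ)^(2*0))⁻¹ = 1 := by norm_num
      calc (1:ℝ) = (γ^(2*0))⁻¹ := h0.symm
        _ ≤ ∑ i ∈ Finset.range (k+1), (γ^(2*i))⁻¹ := by
            apply Finset.single_le_sum (f := fun i => ((γ:ℝ)^(2*i))⁻¹)
            · intro i _
              positivity
            · simp
    have hspos : (0:ℝ) < ∑ i ∈ Finset.range (k+1), (γ^(2*i))⁻¹ := lt_of_lt_of_le one_pos hslb
    rw [hβ]
    constructor
    · positivity
    · exact inv_le_one_of_one_le₀ hslb
  intro k
  induction k with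
  | zero => exact le_refl _
  | succ k ih =>
    obtain ⟨hb0, hb1⟩ := hβpos (k+1)
    have key : U (k+1) - Ustar = β (k+1) • (U 0 - Ustar) + (1 - β (k+1)) • (T (U k) - Ustar) := by
      rw [hU k]; module
    have hTk : ‖T (U k) - Ustar‖ ≤ γ * ‖U k - Ustar‖ := by
      calc ‖T (U k) - Ustar‖ = ‖T (U k) - T Ustar‖ := by rw [hfix]
        _ ≤ γ * ‖U k - Ustar‖ := hT _ _
    calc ‖U (k+1) - Ustar‖
        ≤ ‖β (k+1) • (U 0 - Ustar)‖ + ‖(1 - β (k+1)) • (T (U k) - Ustar)‖ := by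
          rw [key]; exact norm_add_le _ _
      _ = β (k+1) * ‖U 0 - Ustar‖ + (1 - β (k+1)) * ‖T (U k) - Ustar‖ := by
          rw [norm_smul, norm_smul, Real.norm_eq_abs, Real.norm_eq_abs,
            abs_of_pos hb0, abs_of_nonneg (by linarith)]
      _ ≤ β (k+1) * ‖U 0 - Ustar‖ + (1 - β (k+1)) * ‖U 0 - Ustar‖ := by
          have h1 : ‖T (U k) - Ustar‖ ≤ ‖U 0 - Ustar‖ := by
            calc ‖T (U k) - Ustar‖ ≤ γ * ‖U k - Ustar‖ := hTk
              _ ≤ 1 * ‖U 0 - Ustar‖ := by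
                  apply mul_le_mul (le_of_lt hγ1) ih (norm_nonneg _) zero_le_one
              _ = ‖U 0 - Ustar‖ := one_mul _
          nlinarith [norm_nonneg (U 0 - Ustar)]
      _ = ‖U 0 - Ustar‖ := by ring
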